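/- Let p > 2, 1 < α < 2, and ν > 0. Then there exists δ ∈ (0, 1) such that for all x ∈ (0, δ), (1 + x^p + pν x^α)^{2/p} > 1 + x². Consequently, for such x, f(x, 1) < 1 = f(0, 1), where f(x,y) = (x²+y²)/(x^p+y^p+pνx^αy^β)^{2/p} with β = p − α; hence no point of the form (0, y) or (x, 0) minimizes f over {x, y ≥ 0, (x,y) ≠ (0,0)}. -/

import Mathlib

open Real

noncomputable section

/-- The function `f(x,y) = (x²+y²)/(x^p + y^p + pν x^α y^(p-α))^(2/p)`. -/
def fmin (p ν α x y : ℝ) : ℝ :=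
  (x^2 + y^2) / ((x ^ p + y ^ p + p*ν * x ^ α * y ^ (p - α)) ^ (2/p))

lemma chord (s t : ℝ) (hs : 1 ≤ s) (ht0 : 0 ≤ t) (ht1 : t ≤ 1) :
    (1 + t) ^ s ≤ 1 + ((2:ℝ) ^ s - 1) * t := by
  have hc := (convexOn_rpow hs).2 (Set.mem_Ici.2 zero_le_one)
    (Set.mem_Ici.2 (by norm_num : (0:ℝ) ≤ 2)) (by linarith : (0:ℝ) ≤ 1 - t) ht0 (by ring)
  simp only [smul_eq_mul] at hc
  have h1 : (1 - t) * 1 + t * 2 = 1 + t := by ring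
  rw [h1, Real.one_rpow] at hc
  linarith

theorem stmt (p ν α : ℝ) (hp : 2 < p) (hα₁ : 1 < α) (hα₂ : α < 2) (hν : 0 < ν) :
    (∃ δ : ℝ, 0 < δ ∧ δ < 1 ∧
      ∀ x : ℝ, 0 < x → x < δ →
        1 + x^2 < (1 + x ^ p + p*ν * x ^ α) ^ (2/p) ∧ fmin p ν α x 1 < 1) ∧
    fmin p ν α 0 1 = 1 ∧
    (∀ x y : ℝ, 0 ≤ x → 0 ≤ y → (x, y) ≠ (0, 0) → (x = 0 ∨ y = 0) →
      ¬ (∀ x' y' : ℝ, 0 ≤ x' → 0 ≤ y' → (x', y') ≠ (0, 0) →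
        fmin p ν α x y ≤ fmin p ν α x' y')) := by
  have hp0 : (0:ℝ) < p := by linarith
  have hpne : p ≠ 0 := ne_of_gt hp0
  have hαne : α ≠ 0 := by positivity
  have hpα : 0 < p - α := by linarith
  have h2α : 0 < 2 - α := by linarith
  obtain ⟨K, hKdef⟩ : ∃ K : ℝ, K = (2:ℝ) ^ (p/2) - 1 := ⟨_, rfl⟩
  have hK : 0 < K := by
    have h1 : (1:ℝ) < (2:ℝ) ^ (p/2) := by
      rw [Real.one_lt_rpow_iff_of_pos (by norm_num)]
      exact Or.inl ⟨by norm_num, by linarith⟩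
    rw [hKdef]; linarith
  have hpνK : 0 < p * ν / K := by positivity
  obtain ⟨δ₀, hδ₀def⟩ : ∃ d : ℝ, d = (p * ν / K) ^ (1/(2-α)) := ⟨_, rfl⟩
  have hδ₀ : 0 < δ₀ := hδ₀def ▸ Real.rpow_pos_of_pos hpνK _
  obtain ⟨δ, hδdef⟩ : ∃ d : ℝ, d = min (1/2) δ₀ := ⟨_, rfl⟩
  have hδpos : 0 < δ := hδdef ▸ lt_min (by norm_num) hδ₀
  have hδ1 : δ < 1 := hδdef ▸ lt_of_le_of_lt (min_le_left _ _) (by norm_num)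
  -- Main estimate
  have key : ∀ x : ℝ, 0 < x → x < δ →
      1 + x^2 < (1 + x ^ p + p*ν * x ^ α) ^ (2/p) := by
    intro x hx hxδ
    have hxhalf : x < 1/2 := lt_of_lt_of_le (hδdef ▸ hxδ) (min_le_left _ _)
    have hxδ₀ : x < δ₀ := lt_of_lt_of_le (hδdef ▸ hxδ) (min_le_right _ _)
    have hx2le1 : x^2 ≤ 1 := by nlinarith
    have hstep : x ^ (2-α) < p * ν / K := by
      have h1 : x ^ (2-α) < δ₀ ^ (2-α) := Real.rpow_lt_rpow hx.le hxδ₀ h2α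
      have h2 : δ₀ ^ (2-α) = p * ν / K := by
        rw [hδ₀def, ← Real.rpow_mul hpνK.le]
        rw [one_div_mul_cancel (ne_of_gt h2α), Real.rpow_one]
      rwa [h2] at h1
    have hKx : K * x ^ 2 < p * ν * x ^ α := by
      have h1 : K * x ^ (2-α) < p * ν := by
        rw [lt_div_iff₀ hK] at hstep; linarith [hstep]
      have h2 : x ^ (2-α) * x ^ α = x ^ 2 := by
        rw [← Real.rpow_add hx, show 2 - α + α = ((2:ℕ):ℝ) by push_cast; ring,
          Real.rpow_natCast]
      have h3 := mul_lt_mul_of_pos_right h1 (Real.rpow_pos_of_pos hx α)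
      calc K * x ^ 2 = K * x ^ (2-α) * x ^ α := by rw [mul_assoc, h2]
        _ < p * ν * x ^ α := h3
    have hchord : (1 + x^2) ^ (p/2) ≤ 1 + K * x^2 := by
      have h := chord (p/2) (x^2) (by linarith) (by positivity) hx2le1
      rw [← hKdef] at h; exact h
    have hxp : 0 ≤ x ^ p := Real.rpow_nonneg hx.le p
    have hB : (1 + x^2) ^ (p/2) < 1 + x ^ p + p * ν * x ^ α := by linarith
    have h1x2 : (0:ℝ) < 1 + x^2 := by positivity
    have hfinal : ((1 + x^2) ^ (p/2)) ^ (2/p) <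
        (1 + x ^ p + p*ν * x ^ α) ^ (2/p) :=
      Real.rpow_lt_rpow (Real.rpow_nonneg h1x2.le _) hB (by positivity)
    rwa [← Real.rpow_mul h1x2.le, show p/2 * (2/p) = 1 by field_simp,
      Real.rpow_one] at hfinal
  have hBpos : ∀ x : ℝ, 0 < x →
      (0:ℝ) < (1 + x ^ p + p*ν * x ^ α) ^ (2/p) := by
    intro x hx
    have h1 : 0 ≤ x ^ p := Real.rpow_nonneg hx.le p
    have h2 : 0 < p * ν * x ^ α :=
      mul_pos (mul_pos hp0 hν) (Real.rpow_pos_of_pos hx α)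
    have h3 : (0:ℝ) < 1 + x ^ p + p*ν * x ^ α := by linarith
    positivity
  have hfmin1 : ∀ x : ℝ, 0 < x → x < δ → fmin p ν α x 1 < 1 := by
    intro x hx hxδ
    have h := key x hx hxδ
    have hb := hBpos x hx
    rw [fmin, Real.one_rpow, Real.one_rpow, mul_one, one_pow,
      show x ^ p + 1 + p*ν * x ^ α = 1 + x ^ p + p*ν * x ^ α by ring,
      div_lt_one hb]
    linarith
  refine ⟨⟨δ, hδpos, hδ1, fun x hx hxδ => ⟨key x hx hxδ, hfmin1 x hx hxδ⟩⟩, ?_, ?_⟩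
  · rw [fmin, Real.zero_rpow hpne, Real.zero_rpow hαne, Real.one_rpow, Real.one_rpow]
    norm_num
  · intro x y hx hy hxy hor hmin
    have hval : fmin p ν α x y = 1 := by
      rcases hor with rfl | rfl
      · have hy' : 0 < y := by
          rcases lt_or_eq_of_le hy with h | h
          · exact h
          · exact absurd (by rw [← h]) hxy
        have hden : (y ^ p) ^ (2/p) = y ^ 2 := by
          rw [← Real.rpow_mul hy'.le, show p * (2/p) = ((2:ℕ):ℝ) by field_simp; norm_num,
            Real.rpow_natCast]
        rw [fmin, Real.zero_rpow hpne, Real.zero_rpow hαne]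
        simp only [mul_zero, zero_mul, zero_add, add_zero, hden]
        rw [zero_pow two_ne_zero, zero_add, div_self (pow_ne_zero 2 (ne_of_gt hy'))]
      · have hx' : 0 < x := by
          rcases lt_or_eq_of_le hx with h | h
          · exact h
          · exact absurd (by rw [← h]) hxy
        have hden : (x ^ p) ^ (2/p) = x ^ 2 := by
          rw [← Real.rpow_mul hx'.le, show p * (2/p) = ((2:ℕ):ℝ) by field_simp; norm_num,
            Real.rpow_natCast]
        rw [fmin, Real.zero_rpow hpne, Real.zero_rpow (ne_of_gt hpα)]
        simp only [mul_zero, zero_mul, zero_add, add_zero, hden]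
        rw [zero_pow two_ne_zero, add_zero, div_self (pow_ne_zero 2 (ne_of_gt hx'))]
    have h2 := hmin (δ/2) 1 (by linarith) zero_le_one (by
      simp only [ne_eq, Prod.mk.injEq, not_and]
      intro h; norm_num)
    have h3 : fmin p ν α (δ/2) 1 < 1 := hfmin1 (δ/2) (by linarith) (by linarith)
    rw [hval] at h2
    linarith
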